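/- Let m ≥ 2 and let M_1, …, M_m be invertible real N×N matrices, with indices taken modulo m. Let J := { q ∈ {1,…,m} : M_q has at least one strictly negative entry }; assume J is nonempty and that q ∈ J implies q+1 ∉ J (so that no two cyclically consecutive matrices have negative entries; matrices not in J have all entries nonnegative). Suppose the full cyclic product M^{(1)} is diagonalizable over ℂ and has an algebraically simple complex eigenvalue λ_c with |λ_c| ≠ 1 and |μ| < |λ_c| for every other complex eigenvalue μ. Then ℓ(U^{-∞}(M^{(j)})) > 0 for every j ∈ {1,…,m} if and only if ℓ(U^{-∞}(M^{(q+1)})) > 0 for every q ∈ J. -/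

import Mathlib

open Matrix MeasureTheory Filter Set

noncomputable section

/-- `U^{-∞}(M)`: points of the open negative orthant all of whose iterates under `M`
tend to `-∞` in every coordinate. -/
def UnegInf {N : ℕ} (M : Matrix (Fin N) (Fin N) ℝ) : Set (Fin N → ℝ) :=
  {y | (∀ i, y i < 0) ∧ ∀ i, Tendsto (fun k : ℕ => ((M ^ k) *ᵥ y) i) atTop atBot}

/-- `μ ∈ ℂ` is an eigenvalue of the real matrix `M` regarded as a complex matrix. -/
def IsCEigenvalue {N : ℕ} (M : Matrix (Fin N) (Fin N) ℝ) (μ : ℂ) : Prop :=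
  ∃ v : Fin N → ℂ, v ≠ 0 ∧ (M.map Complex.ofReal) *ᵥ v = μ • v

/-- `M` is diagonalizable over `ℂ`: `ℂ^N` has a basis of eigenvectors of `M`. -/
def DiagonalizableOverC {N : ℕ} (M : Matrix (Fin N) (Fin N) ℝ) : Prop :=
  ∃ b : Module.Basis (Fin N) ℂ (Fin N → ℂ), ∀ i, ∃ μ : ℂ,
    (M.map Complex.ofReal) *ᵥ (b i) = μ • (b i)

/-- Cyclic product of `d` of the matrices `M_j, M_{j+1}, …` (indices mod `m`),
with `M_j` applied first (i.e. `M_{j+d-1} ⋯ M_{j+1} M_j`). -/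
def cycProd {N m : ℕ} (M : Fin m → Matrix (Fin N) (Fin N) ℝ) (j : Fin m) (d : ℕ) :
    Matrix (Fin N) (Fin N) ℝ :=
  (List.range d).foldl
    (fun A i => M ⟨(j.val + i) % m, Nat.mod_lt _ (lt_of_le_of_lt (Nat.zero_le _) j.isLt)⟩ * A) 1

/-- The full return matrix `M^{(j)} = M_{j-1}⋯M_{j+1}M_j` (all `m` matrices in cyclic
order, `M_j` applied first). -/
def Mfull {N m : ℕ} (M : Fin m → Matrix (Fin N) (Fin N) ℝ) (j : Fin m) :
    Matrix (Fin N) (Fin N) ℝ :=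
  cycProd M j m

/-- The partial-turn matrix `M_{(l,j)} = M_l ⋯ M_j` in cyclic order (`M_j` applied
first, wrapping around if `l < j`); for `l = j` it is just `M_j`. -/
def Mpartial {N m : ℕ} (M : Fin m → Matrix (Fin N) (Fin N) ℝ) (l j : Fin m) :
    Matrix (Fin N) (Fin N) ℝ :=
  cycProd M j ((l.val + m - j.val) % m + 1)

/-- The cyclic successor `q + 1 (mod m)` of an index `q`. -/
def finSucc {m : ℕ} (q : Fin m) : Fin m :=
  ⟨(q.val + 1) % m, Nat.mod_lt _ (lt_of_le_of_lt (Nat.zero_le _) q.isLt)⟩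

/-- The matrix `M_q` has at least one strictly negative entry. -/
def HasNegEntry {N m : ℕ} (M : Fin m → Matrix (Fin N) (Fin N) ℝ) (q : Fin m) : Prop :=
  ∃ i j, M q i j < 0

-- A: unfold one step at the top
lemma cycProd_succ {N m : ℕ} (M : Fin m → Matrix (Fin N) (Fin N) ℝ) (j : Fin m) (d : ℕ) :
    cycProd M j (d + 1) =
      M ⟨(j.val + d) % m, Nat.mod_lt _ (lt_of_le_of_lt (Nat.zero_le _) j.isLt)⟩ *
        cycProd M j d := by
  simp [cycProd, List.range_succ]

-- B: peel one step at the bottom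
lemma cycProd_shift {N m : ℕ} (M : Fin m → Matrix (Fin N) (Fin N) ℝ) (j : Fin m) (d : ℕ) :
    cycProd M j (d + 1) = cycProd M (finSucc j) d * M j := by
  induction d with
  | zero =>
      have e : (⟨(j.val + 0) % m, Nat.mod_lt _ (lt_of_le_of_lt (Nat.zero_le _) j.isLt)⟩ : Fin m) = j :=
        Fin.ext (by simpa using Nat.mod_eq_of_lt j.isLt)
      rw [cycProd_succ, e]
      simp [cycProd]
  | succ d ih =>
      rw [cycProd_succ M j (d+1), ih, cycProd_succ M (finSucc j) d, mul_assoc]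
      have e : (⟨(j.val + (d+1)) % m, Nat.mod_lt _ (lt_of_le_of_lt (Nat.zero_le _) j.isLt)⟩ : Fin m)
          = ⟨((finSucc j).val + d) % m, Nat.mod_lt _ (lt_of_le_of_lt (Nat.zero_le _) (finSucc j).isLt)⟩ := by
        apply Fin.ext
        show (j.val + (d+1)) % m = ((j.val + 1) % m + d) % m
        rw [Nat.mod_add_mod]
        congr 1
        omega
      rw [e]

lemma Mfull_succ_mul {N m : ℕ} (M : Fin m → Matrix (Fin N) (Fin N) ℝ) (j : Fin m) :
    Mfull M (finSucc j) * M j = M j * Mfull M j := by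
  have h1 := cycProd_shift M j m
  have h2 := cycProd_succ M j m
  have e : (⟨(j.val + m) % m, Nat.mod_lt _ (lt_of_le_of_lt (Nat.zero_le _) j.isLt)⟩ : Fin m) = j := by
    apply Fin.ext
    have := j.isLt
    simp [Nat.add_mod_right, Nat.mod_eq_of_lt this]
  rw [e] at h2
  rw [Mfull, Mfull, ← h1, h2]

-- propagation
lemma step_pos {N m : ℕ} (M : Fin m → Matrix (Fin N) (Fin N) ℝ) (i : Fin m)
    (hinv : IsUnit (M i)) (hnn : ¬ HasNegEntry M i)
    (h : 0 < volume (UnegInf (Mfull M i))) :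
    0 < volume (UnegInf (Mfull M (finSucc i))) := by
  set A := M i with hA
  set B := Mfull M i
  set B' := Mfull M (finSucc i)
  have hnn' : ∀ a b, 0 ≤ A a b := by
    intro a b
    by_contra hc
    exact hnn ⟨a, b, by linarith [lt_of_not_ge hc]⟩
  have hdet : A.det ≠ 0 := by
    intro h0
    rw [Matrix.isUnit_iff_isUnit_det, h0] at hinv
    exact (by simpa using hinv : False)
  -- each row has a positive entry
  have hrow : ∀ a, ∃ b, 0 < A a b := by
    intro a
    by_contra hc
    push_neg at hc
    have : ∀ b, A a b = 0 := fun b => le_antisymm (hc b) (hnn' a b)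
    exact hdet (Matrix.det_eq_zero_of_row_eq_zero a this)
  have hcomm : B' * A = A * B := Mfull_succ_mul M i
  have hcommk : ∀ k : ℕ, B' ^ k * A = A * B ^ k := by
    intro k
    induction k with
    | zero => simp
    | succ k ih =>
        rw [pow_succ, pow_succ, mul_assoc, hcomm, ← mul_assoc, ih, mul_assoc]
  -- image inclusion
  have himg : (fun y => A *ᵥ y) '' UnegInf B ⊆ UnegInf B' := by
    rintro _ ⟨y, ⟨hyneg, hytend⟩, rfl⟩
    constructor
    · intro a
      obtain ⟨b₀, hb₀⟩ := hrow a
      show ∑ b, A a b * y b < 0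
      have : ∑ b, A a b * y b < ∑ b : Fin N, (0:ℝ) := by
        apply Finset.sum_lt_sum
        · intro b _
          exact mul_nonpos_of_nonneg_of_nonpos (hnn' a b) (hyneg b).le
        · exact ⟨b₀, Finset.mem_univ _, mul_neg_of_pos_of_neg hb₀ (hyneg b₀)⟩
      simpa using this
    · intro a
      have hrw : ∀ k : ℕ, ((B' ^ k) *ᵥ (A *ᵥ y)) a = ∑ b, A a b * ((B ^ k) *ᵥ y) b := by
        intro k
        rw [mulVec_mulVec, hcommk, ← mulVec_mulVec]
        rfl
      simp only [hrw]
      obtain ⟨b₀, hb₀⟩ := hrow a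
      refine tendsto_atBot_mono' atTop ?_ ((hytend b₀).const_mul_atBot hb₀)
      · -- eventually sum ≤ single term
        have hev : ∀ᶠ k in atTop, ∀ b : Fin N, ((B ^ k) *ᵥ y) b ≤ 0 :=
          eventually_all.2 fun b => (hytend b).eventually_le_atBot 0
        filter_upwards [hev] with k hk
        have : ∑ b, A a b * ((B ^ k) *ᵥ y) b
            = A a b₀ * ((B ^ k) *ᵥ y) b₀ +
              ∑ b ∈ Finset.univ.erase b₀, A a b * ((B ^ k) *ᵥ y) b :=
          (Finset.add_sum_erase _ (fun b => A a b * ((B ^ k) *ᵥ y) b) (Finset.mem_univ b₀)).symm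
        rw [this]
        have hle : ∑ b ∈ Finset.univ.erase b₀, A a b * ((B ^ k) *ᵥ y) b ≤ 0 :=
          Finset.sum_nonpos fun b _ =>
            mul_nonpos_of_nonneg_of_nonpos (hnn' a _) (hk b)
        linarith
  -- measure of image
  have himage : volume ((fun y => A *ᵥ y) '' UnegInf B)
      = ENNReal.ofReal |LinearMap.det (Matrix.toLin' A)| * volume (UnegInf B) := by
    have := Measure.addHaar_image_linearMap (μ := volume) (Matrix.toLin' A) (UnegInf B)
    exact this
  have hpos : 0 < volume ((fun y => A *ᵥ y) '' UnegInf B) := by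
    rw [himage, LinearMap.det_toLin']
    exact ENNReal.mul_pos (by simp [abs_pos, hdet]) h.ne'
  exact hpos.trans_le (measure_mono himg)

lemma finSucc_eq_add_one {m : ℕ} [NeZero m] (a : Fin m) : finSucc a = a + 1 := by
  apply Fin.ext
  rw [Fin.add_def]
  show (a.val + 1) % m = (a.val + (1 : Fin m).val) % m
  rw [Fin.val_one', Nat.add_mod_mod]

open scoped Fin.NatCast Fin.CommRing in
/-- Lemma 3.10: with no two cyclically consecutive matrices having negative entries and
the spectral hypotheses on the full return matrix, `U^{-∞}(M^{(j)})` has positive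
measure for every `j` if and only if it does for every index immediately following a
matrix with a negative entry. -/
theorem stmt6 {N m : ℕ} (hm : 2 ≤ m) (hN : 1 ≤ N)
    (M : Fin m → Matrix (Fin N) (Fin N) ℝ)
    (hinv : ∀ q, IsUnit (M q))
    (hJne : ∃ q, HasNegEntry M q)
    (hconsec : ∀ q, HasNegEntry M q → ¬ HasNegEntry M (finSucc q))
    (hdiag : DiagonalizableOverC (Mfull M ⟨0, by omega⟩))
    (lamc : ℂ)
    (hsimple : Polynomial.rootMultiplicity lamc
      ((Mfull M ⟨0, by omega⟩).map Complex.ofReal).charpoly = 1)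
    (hmod : ‖lamc‖ ≠ 1)
    (hdom : ∀ μ : ℂ, IsCEigenvalue (Mfull M ⟨0, by omega⟩) μ → μ ≠ lamc →
      ‖μ‖ < ‖lamc‖) :
    (∀ j : Fin m, 0 < volume (UnegInf (Mfull M j))) ↔
      (∀ q : Fin m, HasNegEntry M q → 0 < volume (UnegInf (Mfull M (finSucc q)))) := by
  constructor
  · intro h q _
    exact h _
  · intro hq
    haveI : NeZero m := ⟨by omega⟩
    have step : ∀ i : Fin m, 0 < volume (UnegInf (Mfull M i)) →
        0 < volume (UnegInf (Mfull M (finSucc i))) := by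
      intro i hi
      by_cases hne : HasNegEntry M i
      · exact hq i hne
      · exact step_pos M i (hinv i) hne hi
    obtain ⟨q₀, hq₀⟩ := hJne
    have key : ∀ t : ℕ, 0 < volume (UnegInf (Mfull M (finSucc q₀ + (t : Fin m)))) := by
      intro t
      induction t with
      | zero => simpa using hq q₀ hq₀
      | succ t ih =>
          have e : finSucc q₀ + ((t + 1 : ℕ) : Fin m) = finSucc (finSucc q₀ + (t : Fin m)) := by
            have h1 : ((t + 1 : ℕ) : Fin m) = (t : Fin m) + 1 := by push_cast; ring
            rw [h1, ← add_assoc, ← finSucc_eq_add_one]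
          rw [e]
          exact step _ ih
    intro j
    have e2 : finSucc q₀ + (((j - finSucc q₀).val : ℕ) : Fin m) = j := by
      rw [Fin.cast_val_eq_self]
      ring
    have := key (j - finSucc q₀).val
    rwa [e2] at this
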